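/- Define φ(z,s) = 4⁻¹(2(z₁′ − z₁) + 2 z₁^{1/2} z₂, z₁^{1/2})·(−s, s²) for z = (z₁,z₂) with z₁ > 0, fixed z₁′ ∈ ℝ, and s ∈ ℝ. Then the 2×2 matrix M(φ)(z,s) whose rows are ∇_z ∂_s φ and ∇_z ∂_s² φ has determinant identically equal to 1/8. -/

import Mathlib

open Real

noncomputable def csPhase (z₁' z₁ z₂ s : ℝ) : ℝ :=
  4⁻¹ * (-s * (2 * (z₁' - z₁) + 2 * Real.sqrt z₁ * z₂) + s ^ 2 * Real.sqrt z₁)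

lemma csPhase_hasDerivAt (a w b t : ℝ) :
    HasDerivAt (fun u : ℝ => csPhase a w b u)
      (4⁻¹ * (-(2 * (a - w) + 2 * Real.sqrt w * b) + 2 * t * Real.sqrt w)) t := by
  unfold csPhase
  have h := (((hasDerivAt_id t).neg.mul_const (2 * (a - w) + 2 * Real.sqrt w * b)).add
      ((hasDerivAt_pow 2 t).mul_const (Real.sqrt w))).const_mul (4⁻¹ : ℝ)
  exact h.congr_deriv (by ring)

lemma csPhase_deriv (a w b t : ℝ) :
    deriv (fun u : ℝ => csPhase a w b u) t
      = 4⁻¹ * (-(2 * (a - w) + 2 * Real.sqrt w * b) + 2 * t * Real.sqrt w) :=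
  (csPhase_hasDerivAt a w b t).deriv

lemma csPhase_deriv2 (a w b t : ℝ) :
    deriv (deriv (fun u : ℝ => csPhase a w b u)) t = 4⁻¹ * (2 * Real.sqrt w) := by
  have h1 : deriv (fun u : ℝ => csPhase a w b u)
      = fun u : ℝ => 4⁻¹ * (-(2 * (a - w) + 2 * Real.sqrt w * b) + 2 * u * Real.sqrt w) := by
    funext u; exact csPhase_deriv a w b u
  rw [h1]
  have h2 : HasDerivAt
      (fun u : ℝ => 4⁻¹ * (-(2 * (a - w) + 2 * Real.sqrt w * b) + 2 * u * Real.sqrt w))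
      (4⁻¹ * (2 * Real.sqrt w)) t := by
    have h := ((hasDerivAt_const t (-(2 * (a - w) + 2 * Real.sqrt w * b))).add
        (((hasDerivAt_id t).const_mul (2 : ℝ)).mul_const (Real.sqrt w))).const_mul (4⁻¹ : ℝ)
    exact h.congr_deriv (by ring)
  exact h2.deriv

theorem carleson_sjolin_det (z₁' z₁ z₂ s : ℝ) (hz₁ : 0 < z₁) :
    Matrix.det
      ![![deriv (fun w => deriv (fun u => csPhase z₁' w z₂ u) s) z₁,
         deriv (fun w => deriv (fun u => csPhase z₁' z₁ w u) s) z₂],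
        ![deriv (fun w => deriv (deriv (fun u => csPhase z₁' w z₂ u)) s) z₁,
         deriv (fun w => deriv (deriv (fun u => csPhase z₁' z₁ w u)) s) z₂]]
      = 1 / 8 := by
  have hs : Real.sqrt z₁ ≠ 0 := Real.sqrt_ne_zero'.2 hz₁
  have hsq := Real.hasDerivAt_sqrt (ne_of_gt hz₁)
  -- a12
  have h12 : deriv (fun w => deriv (fun u => csPhase z₁' z₁ w u) s) z₂
      = 4⁻¹ * (-(2 * Real.sqrt z₁)) := by
    have h1 : (fun w => deriv (fun u => csPhase z₁' z₁ w u) s)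
        = fun w : ℝ => 4⁻¹ * (-(2 * (z₁' - z₁) + 2 * Real.sqrt z₁ * w) + 2 * s * Real.sqrt z₁) := by
      funext w; exact csPhase_deriv z₁' z₁ w s
    rw [h1]
    have h2 : HasDerivAt
        (fun w : ℝ => 4⁻¹ * (-(2 * (z₁' - z₁) + 2 * Real.sqrt z₁ * w) + 2 * s * Real.sqrt z₁))
        (4⁻¹ * (-(2 * Real.sqrt z₁))) z₂ := by
      have h := ((((hasDerivAt_const z₂ (2 * (z₁' - z₁))).add
          ((hasDerivAt_id z₂).const_mul (2 * Real.sqrt z₁))).neg).add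
          (hasDerivAt_const z₂ (2 * s * Real.sqrt z₁))).const_mul (4⁻¹ : ℝ)
      exact h.congr_deriv (by ring)
    exact h2.deriv
  -- a22
  have h22 : deriv (fun w => deriv (deriv (fun u => csPhase z₁' z₁ w u)) s) z₂ = 0 := by
    have h1 : (fun w => deriv (deriv (fun u => csPhase z₁' z₁ w u)) s)
        = fun _ : ℝ => 4⁻¹ * (2 * Real.sqrt z₁) := by
      funext w; exact csPhase_deriv2 z₁' z₁ w s
    rw [h1, deriv_const]
  -- a21
  have h21 : deriv (fun w => deriv (deriv (fun u => csPhase z₁' w z₂ u)) s) z₁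
      = 4⁻¹ * (2 * (1 / (2 * Real.sqrt z₁))) := by
    have h1 : (fun w => deriv (deriv (fun u => csPhase z₁' w z₂ u)) s)
        = fun w : ℝ => 4⁻¹ * (2 * Real.sqrt w) := by
      funext w; exact csPhase_deriv2 z₁' w z₂ s
    rw [h1]
    exact ((hsq.const_mul (2 : ℝ)).const_mul (4⁻¹ : ℝ)).deriv
  -- a11 : just need differentiability to compute; value times 0 anyway, but compute it
  have h11 : deriv (fun w => deriv (fun u => csPhase z₁' w z₂ u) s) z₁
      = 4⁻¹ * (-( -2 + 2 * (1 / (2 * Real.sqrt z₁)) * z₂) + 2 * s * (1 / (2 * Real.sqrt z₁))) := by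
    have h1 : (fun w => deriv (fun u => csPhase z₁' w z₂ u) s)
        = fun w : ℝ => 4⁻¹ * (-(2 * (z₁' - w) + 2 * Real.sqrt w * z₂) + 2 * s * Real.sqrt w) := by
      funext w; exact csPhase_deriv z₁' w z₂ s
    rw [h1]
    have hinner : HasDerivAt (fun w : ℝ => 2 * (z₁' - w) + 2 * Real.sqrt w * z₂)
        (-2 + 2 * (1 / (2 * Real.sqrt z₁)) * z₂) z₁ := by
      have ha : HasDerivAt (fun w : ℝ => 2 * (z₁' - w)) (-2) z₁ := by
        have := ((hasDerivAt_const z₁ z₁').sub (hasDerivAt_id z₁)).const_mul (2 : ℝ)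
        exact this.congr_deriv (by ring)
      have hb : HasDerivAt (fun w : ℝ => 2 * Real.sqrt w * z₂)
          (2 * (1 / (2 * Real.sqrt z₁)) * z₂) z₁ := (hsq.const_mul 2).mul_const z₂
      exact ha.add hb
    have h2 := (hinner.neg.add (hsq.const_mul (2 * s))).const_mul (4⁻¹ : ℝ)
    exact h2.deriv
  erw [Matrix.det_fin_two]
  simp only [Matrix.cons_val', Matrix.cons_val_zero, Matrix.cons_val_one, Matrix.head_cons,
    Matrix.empty_val', Matrix.cons_val_fin_one, Matrix.head_fin_const]
  rw [h11, h12, h21, h22]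
  field_simp
  ring
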